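/- Let Z be a real m×n matrix with singular value decomposition Z = U·diag(σ)·V', where the singular values σ₁ ≥ σ₂ ≥ ⋯ are arranged in nonincreasing order, and let k ≥ 1 be an integer. For each i ≥ 1 let I_i = {k(i−1)+1, …, ki} and let Z_i = U_{I_i}·diag(σ_{I_i})·V_{I_i}' denote the matrix formed from the i-th block of k consecutive singular values and corresponding singular vectors, so that Z = Σ_i Z_i. Then Σ_{j≥2} ‖Z_j‖_F ≤ (1/√k)·‖Z‖_*. -/

import Mathlib

open Matrix

/-- The Frobenius norm of a real matrix. -/
noncomputable def frobNorm {m n : Type*} [Fintype m] [Fintype n] (X : Matrix m n ℝ) : ℝ :=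
  Real.sqrt (∑ i, ∑ j, X i j ^ 2)

section

open scoped ComplexOrder

/-- The positive semidefinite square root of a positive semidefinite matrix
(removed from Mathlib; restored with its former definition). -/
noncomputable def Matrix.PosSemidef.sqrt {𝕜 : Type*} [RCLike 𝕜] {n : Type*} [Fintype n]
    [DecidableEq n] {A : Matrix n n 𝕜} (hA : A.PosSemidef) : Matrix n n 𝕜 :=
  hA.1.eigenvectorUnitary.1 * diagonal ((↑) ∘ (√·) ∘ hA.1.eigenvalues) *
  (star hA.1.eigenvectorUnitary : Matrix n n 𝕜)

end

/-- The nuclear norm (sum of singular values) of a real matrix, as the trace of √(XᵀX). -/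
noncomputable def nucNorm {m n : Type*} [Fintype m] [Fintype n] [DecidableEq n]
    (X : Matrix m n ℝ) : ℝ :=
  (Matrix.posSemidef_conjTranspose_mul_self X).sqrt.trace

lemma frob_sq_svd (m n q : ℕ) (U : Matrix (Fin m) (Fin q) ℝ) (V : Matrix (Fin n) (Fin q) ℝ)
    (hU : Uᵀ * U = 1) (hV : Vᵀ * V = 1) (d : Fin q → ℝ) :
    ∑ i, ∑ j, (U * Matrix.diagonal d * Vᵀ) i j ^ 2 = ∑ j, d j ^ 2 := by
  have h1 : ∀ (X : Matrix (Fin m) (Fin n) ℝ), (Xᵀ * X).trace = ∑ i, ∑ j, X i j ^ 2 := by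
    intro X
    simp [Matrix.trace, Matrix.mul_apply, sq, Matrix.diag]
    rw [Finset.sum_comm]
  rw [← h1]
  have h2 : (U * Matrix.diagonal d * Vᵀ)ᵀ * (U * Matrix.diagonal d * Vᵀ)
      = V * (Matrix.diagonal d * Matrix.diagonal d) * Vᵀ := by
    simp only [Matrix.transpose_mul, Matrix.transpose_transpose, Matrix.diagonal_transpose]
    calc V * (Matrix.diagonal d * Uᵀ) * (U * Matrix.diagonal d * Vᵀ)
        = V * Matrix.diagonal d * (Uᵀ * U) * Matrix.diagonal d * Vᵀ := by
          simp only [Matrix.mul_assoc]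
      _ = V * (Matrix.diagonal d * Matrix.diagonal d) * Vᵀ := by
          rw [hU]; simp only [Matrix.mul_one, Matrix.mul_assoc]
  rw [h2, Matrix.trace_mul_comm, ← Matrix.mul_assoc, hV, Matrix.one_mul,
    Matrix.diagonal_mul_diagonal, Matrix.trace_diagonal]
  simp [sq]

open scoped MatrixOrder in
lemma psd_sqrt_eq_cfc_sqrt {n : Type*} [Fintype n] [DecidableEq n] {A : Matrix n n ℝ}
    (hA : A.PosSemidef) : hA.sqrt = CFC.sqrt A := by
  rw [CFC.sqrt_eq_cfc, cfc_nnreal_eq_real _ A, hA.1.cfc_eq]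
  simp only [IsHermitian.cfc, Matrix.PosSemidef.sqrt, Unitary.conjStarAlgAut_apply]
  congr 3
  funext i
  simp [hA.eigenvalues_nonneg i]

open scoped MatrixOrder in
lemma psd_eq_sqrt_of_sq_eq {n : Type*} [Fintype n] [DecidableEq n] {A B : Matrix n n ℝ}
    (hA : A.PosSemidef) (hB : B.PosSemidef) (h : A ^ 2 = B) : A = hB.sqrt := by
  rw [psd_sqrt_eq_cfc_sqrt]
  exact (CFC.sqrt_unique (by rw [← pow_two]; exact h) hA.nonneg).symm

lemma nucNorm_svd (m n q : ℕ) (U : Matrix (Fin m) (Fin q) ℝ) (V : Matrix (Fin n) (Fin q) ℝ)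
    (hU : Uᵀ * U = 1) (hV : Vᵀ * V = 1) (σ : Fin q → ℝ) (hσ : ∀ j, 0 ≤ σ j) :
    nucNorm (U * Matrix.diagonal σ * Vᵀ) = ∑ j, σ j := by
  set Z := U * Matrix.diagonal σ * Vᵀ with hZ
  set W := V * Matrix.diagonal σ * Vᵀ with hW
  have hWpsd : W.PosSemidef := by
    have : W = (Matrix.diagonal (fun j => Real.sqrt (σ j)) * Vᵀ)ᵀ
        * (Matrix.diagonal (fun j => Real.sqrt (σ j)) * Vᵀ) := by
      simp only [hW, Matrix.transpose_mul, Matrix.transpose_transpose,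
        Matrix.diagonal_transpose]
      rw [show V * Matrix.diagonal (fun j => Real.sqrt (σ j)) *
          (Matrix.diagonal (fun j => Real.sqrt (σ j)) * Vᵀ)
          = V * (Matrix.diagonal (fun j => Real.sqrt (σ j)) *
            Matrix.diagonal (fun j => Real.sqrt (σ j))) * Vᵀ by
        simp only [Matrix.mul_assoc]]
      rw [Matrix.diagonal_mul_diagonal,
        show (fun i : Fin q => Real.sqrt (σ i) * Real.sqrt (σ i)) = σ from
          funext fun i => Real.mul_self_sqrt (hσ i)]
    rw [this]
    exact Matrix.posSemidef_conjTranspose_mul_self _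
  have hsq : W ^ 2 = Zᵀ * Z := by
    rw [pow_two, hW, hZ]
    simp only [Matrix.transpose_mul, Matrix.transpose_transpose, Matrix.diagonal_transpose]
    calc V * Matrix.diagonal σ * Vᵀ * (V * Matrix.diagonal σ * Vᵀ)
        = V * Matrix.diagonal σ * (Vᵀ * V) * Matrix.diagonal σ * Vᵀ := by
          simp only [Matrix.mul_assoc]
      _ = V * (Matrix.diagonal σ * Uᵀ) * (U * Matrix.diagonal σ * Vᵀ) := by
          rw [hV]
          rw [show V * (Matrix.diagonal σ * Uᵀ) * (U * Matrix.diagonal σ * Vᵀ)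
              = V * Matrix.diagonal σ * (Uᵀ * U) * Matrix.diagonal σ * Vᵀ by
            simp only [Matrix.mul_assoc]]
          rw [hU]
  have hWsqrt : W = (Matrix.posSemidef_conjTranspose_mul_self Z).sqrt :=
    psd_eq_sqrt_of_sq_eq hWpsd _ hsq
  rw [nucNorm, ← hWsqrt, hW, Matrix.trace_mul_comm, ← Matrix.mul_assoc, hV,
    Matrix.one_mul, Matrix.trace_diagonal]

lemma block_sqrt_le (q k : ℕ) (hk : 1 ≤ k) (σ : Fin q → ℝ) (hσ : ∀ j, 0 ≤ σ j)
    (hmono : Antitone σ) (i : ℕ) (hi : 1 ≤ i) :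
    Real.sqrt (∑ j ∈ Finset.univ.filter (fun j : Fin q => (j : ℕ) / k = i), σ j ^ 2)
      ≤ (1 / Real.sqrt k) *
        ∑ j ∈ Finset.univ.filter (fun j : Fin q => (j : ℕ) / k = i - 1), σ j := by
  have hk0 : (0:ℝ) < k := by exact_mod_cast hk
  have hsk : (0:ℝ) < Real.sqrt k := Real.sqrt_pos.mpr hk0
  set T : ℕ → Finset (Fin q) := fun a => Finset.univ.filter (fun j : Fin q => (j : ℕ) / k = a)
    with hT
  set s : ℝ := ∑ j ∈ T (i - 1), σ j with hs
  have hs0 : 0 ≤ s := Finset.sum_nonneg fun j _ => hσ j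
  -- per element bound
  have key : ∀ j ∈ T i, σ j ≤ s / k := by
    intro j hj
    have hjk : (j : ℕ) / k = i := by simpa [hT] using hj
    have hle : ∀ j' ∈ T (i - 1), σ j ≤ σ j' := by
      intro j' hj'
      have hj'k : (j' : ℕ) / k = i - 1 := by simpa [hT] using hj'
      apply hmono
      have hlt : (j' : ℕ) < (j : ℕ) := by
        by_contra h
        push_neg at h
        have := Nat.div_le_div_right (c := k) h
        omega
      exact le_of_lt (by exact_mod_cast hlt)
    have hjq : k * i ≤ (j : ℕ) := by
      have := Nat.div_mul_le_self (j : ℕ) k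
      calc k * i = (j : ℕ) / k * k := by rw [hjk]; ring
        _ ≤ (j : ℕ) := Nat.div_mul_le_self _ _
    have hcard : k ≤ (T (i - 1)).card := by
      have hsurj : Set.SurjOn (Fin.val) (T (i - 1) : Set (Fin q))
          (Finset.Ico (k * (i - 1)) (k * i) : Set ℕ) := by
        intro x hx
        simp only [Finset.coe_Ico, Set.mem_Ico] at hx
        have hxq : x < q := lt_of_lt_of_le hx.2 (le_trans hjq (le_of_lt j.isLt))
        refine ⟨⟨x, hxq⟩, ?_, rfl⟩
        simp only [hT, Finset.coe_filter, Set.mem_setOf_eq, Finset.mem_univ, true_and]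
        have hdm := Nat.div_add_mod x k
        have hmd := Nat.mod_lt x (show 0 < k by omega)
        have h1 : k * (i - 1) + k = k * i := by
          cases i with
          | zero => omega
          | succ i' => simp [Nat.mul_succ]
        have h2 : k * (x / k) ≤ x := by omega
        -- show x / k = i - 1
        rcases Nat.lt_trichotomy (x / k) (i - 1) with h | h | h
        · exfalso
          have : x / k + 1 ≤ i - 1 := h
          have : k * (x / k + 1) ≤ k * (i - 1) := Nat.mul_le_mul_left k this
          simp [Nat.mul_add] at this
          omega
        · exact h
        · exfalso
          have : i - 1 + 1 ≤ x / k := h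
          have : k * (i - 1 + 1) ≤ k * (x / k) := Nat.mul_le_mul_left k this
          simp [Nat.mul_add] at this
          omega
      have hcc := Finset.card_le_card_of_surjOn _ hsurj
      rw [Nat.card_Ico] at hcc
      have h1 : k * (i - 1) + k = k * i := by
        cases i with
        | zero => omega
        | succ i' => simp [Nat.mul_succ]
      omega
    have hksj : (k : ℝ) * σ j ≤ s := by
      have h1 : (T (i - 1)).card • σ j ≤ s := Finset.card_nsmul_le_sum _ _ _ hle
      rw [nsmul_eq_mul] at h1
      calc (k : ℝ) * σ j ≤ ((T (i - 1)).card : ℝ) * σ j :=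
            mul_le_mul_of_nonneg_right (by exact_mod_cast hcard) (hσ j)
        _ ≤ s := h1
    rw [le_div_iff₀ hk0]
    linarith [hksj]
  have hcardi : (T i).card ≤ k := by
    have hinj : Set.InjOn (Fin.val) (T i : Set (Fin q)) := fun a _ b _ h => Fin.val_injective h
    have hmaps : ∀ j ∈ T i, (j : ℕ) ∈ Finset.Ico (k * i) (k * i + k) := by
      intro j hj
      have hjk : (j : ℕ) / k = i := by simpa [hT] using hj
      have h1 := Nat.div_add_mod (j : ℕ) k
      rw [hjk] at h1
      have h2 := Nat.mod_lt (j : ℕ) (show 0 < k by omega)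
      simp only [Finset.mem_Ico]
      omega
    have := Finset.card_le_card_of_injOn _ hmaps hinj
    simpa using this
  have hsum : ∑ j ∈ T i, σ j ^ 2 ≤ (k : ℝ) * (s / k) ^ 2 := by
    have h1 : ∑ j ∈ T i, σ j ^ 2 ≤ (T i).card • ((s / k) ^ 2) := by
      apply Finset.sum_le_card_nsmul
      intro j hj
      exact pow_le_pow_left₀ (hσ j) (key j hj) 2
    rw [nsmul_eq_mul] at h1
    calc ∑ j ∈ T i, σ j ^ 2 ≤ ((T i).card : ℝ) * (s / k) ^ 2 := h1
      _ ≤ (k : ℝ) * (s / k) ^ 2 :=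
          mul_le_mul_of_nonneg_right (by exact_mod_cast hcardi) (by positivity)
  have final : Real.sqrt (∑ j ∈ T i, σ j ^ 2) ≤ (1 / Real.sqrt k) * s := by
    calc Real.sqrt (∑ j ∈ T i, σ j ^ 2) ≤ Real.sqrt ((k : ℝ) * (s / k) ^ 2) :=
          Real.sqrt_le_sqrt hsum
      _ = Real.sqrt k * (s / k) := by
          rw [Real.sqrt_mul hk0.le, Real.sqrt_sq (by positivity)]
      _ = (1 / Real.sqrt k) * s := by
          have hkk : Real.sqrt k * Real.sqrt k = (k : ℝ) := Real.mul_self_sqrt hk0.le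
          field_simp
          nlinarith [hkk]
  exact final

/-- Block decomposition of the singular values: if Z = U diag(σ) Vᵀ is an SVD of Z
(U, V with orthonormal columns, σ nonnegative and nonincreasing), and Z is split into
pieces Zb i corresponding to consecutive blocks of k singular values (block i, starting
from i = 0, contains the singular values with index j satisfying j / k = i), then the sum
of the Frobenius norms of all blocks after the first satisfies
Σ_{i ≥ 1} ‖Zb i‖_F ≤ (1/√k) ‖Z‖₊. -/
theorem sum_frobNorm_tail_blocks_le (m n q k : ℕ) (hk : 1 ≤ k)
    (U : Matrix (Fin m) (Fin q) ℝ) (V : Matrix (Fin n) (Fin q) ℝ) (σ : Fin q → ℝ)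
    (hU : Uᵀ * U = 1) (hV : Vᵀ * V = 1)
    (hσ : ∀ j, 0 ≤ σ j) (hmono : Antitone σ)
    (Z : Matrix (Fin m) (Fin n) ℝ) (hZ : Z = U * Matrix.diagonal σ * Vᵀ)
    (Zb : ℕ → Matrix (Fin m) (Fin n) ℝ)
    (hZb : ∀ i, Zb i =
      U * Matrix.diagonal (fun j : Fin q => if (j : ℕ) / k = i then σ j else 0) * Vᵀ) :
    ∑ i ∈ Finset.Icc 1 q, frobNorm (Zb i) ≤ (1 / Real.sqrt k) * nucNorm Z := by
  have hnuc : nucNorm Z = ∑ j, σ j := by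
    rw [hZ]; exact nucNorm_svd m n q U V hU hV σ hσ
  have hfrob : ∀ i, frobNorm (Zb i) =
      Real.sqrt (∑ j ∈ Finset.univ.filter (fun j : Fin q => (j : ℕ) / k = i), σ j ^ 2) := by
    intro i
    rw [hZb i, frobNorm, frob_sq_svd m n q U V hU hV]
    congr 1
    rw [Finset.sum_filter]
    apply Finset.sum_congr rfl
    intro j _
    split <;> simp
  calc ∑ i ∈ Finset.Icc 1 q, frobNorm (Zb i)
      ≤ ∑ i ∈ Finset.Icc 1 q, (1 / Real.sqrt k) *
          ∑ j ∈ Finset.univ.filter (fun j : Fin q => (j : ℕ) / k = i - 1), σ j := by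
        apply Finset.sum_le_sum
        intro i hi
        rw [hfrob i]
        exact block_sqrt_le q k hk σ hσ hmono i (Finset.mem_Icc.mp hi).1
    _ = (1 / Real.sqrt k) * ∑ i ∈ Finset.Icc 1 q,
          ∑ j ∈ Finset.univ.filter (fun j : Fin q => (j : ℕ) / k = i - 1), σ j := by
        rw [Finset.mul_sum]
    _ ≤ (1 / Real.sqrt k) * nucNorm Z := by
        apply mul_le_mul_of_nonneg_left _ (by positivity)
        rw [hnuc]
        have hshift : ∑ i ∈ Finset.Icc 1 q,
            (∑ j ∈ Finset.univ.filter (fun j : Fin q => (j : ℕ) / k = i - 1), σ j)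
            = ∑ i ∈ Finset.range q,
              ∑ j ∈ Finset.univ.filter (fun j : Fin q => (j : ℕ) / k = i), σ j := by
          rw [show Finset.Icc 1 q = Finset.Ico 1 (q + 1) from by rw [Finset.Ico_add_one_right_eq_Icc],
            Finset.sum_Ico_eq_sum_range]
          simp
        rw [hshift]
        have hfib : ∑ i ∈ Finset.range q,
            ∑ j ∈ Finset.univ.filter (fun j : Fin q => (j : ℕ) / k = i), σ j
            = ∑ j, σ j := by
          apply Finset.sum_fiberwise_of_maps_to
          intro j _
          simp only [Finset.mem_range]
          exact lt_of_le_of_lt (Nat.div_le_self _ _) j.isLt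
        rw [hfib]
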